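/- Let h₁, h₂ > 0 and let N_c ∈ ℝ^{8×3} be the VEM matrix of the rectangle with vertices (±h₁, ±h₂) and x̄ = 0. Then N_cᵀ N_c is invertible and tr((N_cᵀ N_c)⁻¹) = 1/(4h₁²) + 1/(4h₂²) + 1/(2(h₁² + h₂²)). -/

import Mathlib

open Matrix

/-- The VEM matrix `N_c ∈ ℝ^{8×3}` of the rectangle with vertices `(±h₁, ±h₂)` and
node-average point `x̄ = 0`: for each vertex `r = x_i − x̄` it stacks the 2×3 block
`[[r₁, 0, r₂/√2], [0, r₂, r₁/√2]]`. -/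
noncomputable def Nc (h1 h2 : ℝ) : Matrix (Fin 8) (Fin 3) ℝ :=
  !![h1, 0, h2 / Real.sqrt 2;
     0, h2, h1 / Real.sqrt 2;
     h1, 0, -h2 / Real.sqrt 2;
     0, -h2, h1 / Real.sqrt 2;
     -h1, 0, h2 / Real.sqrt 2;
     0, h2, -h1 / Real.sqrt 2;
     -h1, 0, -h2 / Real.sqrt 2;
     0, -h2, -h1 / Real.sqrt 2]

lemma NcT_mul_Nc (h1 h2 : ℝ) :
    (Nc h1 h2)ᵀ * Nc h1 h2 =
      !![4 * h1 ^ 2, 0, 0; 0, 4 * h2 ^ 2, 0; 0, 0, 2 * (h1 ^ 2 + h2 ^ 2)] := by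
  have hs : Real.sqrt 2 * Real.sqrt 2 = 2 := Real.mul_self_sqrt (by norm_num)
  have hne : Real.sqrt 2 ≠ 0 := by positivity
  ext i j
  fin_cases i <;> fin_cases j
  all_goals simp [Nc, Matrix.mul_apply, Fin.sum_univ_succ]
  all_goals try field_simp
  all_goals try ring_nf
  all_goals try simp [hs, vecHead, vecTail]
  all_goals try ring

/-- For the rectangle `[−h₁,h₁]×[−h₂,h₂]`, the matrix `N_cᵀ N_c` is invertible and
`tr((N_cᵀ N_c)⁻¹) = 1/(4h₁²) + 1/(4h₂²) + 1/(2(h₁² + h₂²))`. -/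
theorem trace_inv_NcT_mul_Nc (h1 h2 : ℝ) (hh1 : 0 < h1) (hh2 : 0 < h2) :
    IsUnit ((Nc h1 h2)ᵀ * Nc h1 h2) ∧
    ((Nc h1 h2)ᵀ * Nc h1 h2)⁻¹.trace =
      1 / (4 * h1 ^ 2) + 1 / (4 * h2 ^ 2) + 1 / (2 * (h1 ^ 2 + h2 ^ 2)) := by
  have hM := NcT_mul_Nc h1 h2
  have h1' : (4 * h1 ^ 2) ≠ 0 := by positivity
  have h2' : (4 * h2 ^ 2) ≠ 0 := by positivity
  have h3' : (2 * (h1 ^ 2 + h2 ^ 2)) ≠ 0 := by positivity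
  have hinv : ((Nc h1 h2)ᵀ * Nc h1 h2) *
      !![(4 * h1 ^ 2)⁻¹, 0, 0; 0, (4 * h2 ^ 2)⁻¹, 0; 0, 0, (2 * (h1 ^ 2 + h2 ^ 2))⁻¹] = 1 := by
    rw [hM]
    ext i j
    fin_cases i <;> fin_cases j <;>
      · simp [Matrix.mul_apply, Fin.sum_univ_succ, Matrix.one_apply, h1', h2', h3']
        try field_simp
        try ring
  have hunit : IsUnit ((Nc h1 h2)ᵀ * Nc h1 h2) := by
    exact (Matrix.isUnit_iff_isUnit_det _).mpr (Matrix.isUnit_det_of_right_inverse hinv)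
  refine ⟨hunit, ?_⟩
  rw [Matrix.inv_eq_right_inv hinv, Matrix.trace_fin_three]
  norm_num [Matrix.cons_val_zero, Matrix.cons_val_one, Matrix.cons_val_two]
  try field_simp
  try ring
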